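/- arXiv:1301.1395 — 4 statements merged into one kernel-verified Lean document; each statement's English description precedes it below -/
import Mathlib

section
/- Let (I,J) be an approximating pair, i.e. I ⊆ J. If (I,J) ⊨ φ under the pair evaluation, then for every interpretation K with I ⊆ K ⊆ J we have K ⊨ φ classically. -/
/-- Propositional formulas over a set of atoms `α`, built with ¬, ∧, ∨. -/
inductive PForm (α : Type) : Type
  | atom : α → PForm α
  | neg  : PForm α → PForm α
  | conj : PForm α → PForm α → PForm α
  | disj : PForm α → PForm α → PForm α

/-- Classical satisfaction `I ⊨ φ`; an interpretation is a set of true atoms. -/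
def PForm.sat {α : Type} (I : Set α) : PForm α → Prop
  | .atom p => p ∈ I
  | .neg ψ => ¬ PForm.sat I ψ
  | .conj a b => PForm.sat I a ∧ PForm.sat I b
  | .disj a b => PForm.sat I a ∨ PForm.sat I b

/-- Pair evaluation `(I,J) ⊨ φ`: atoms in `I`, the pair is swapped at negations. -/
def PForm.psat {α : Type} : Set α → Set α → PForm α → Prop
  | I, _, .atom p => p ∈ I
  | I, J, .neg ψ => ¬ PForm.psat J I ψ
  | I, J, .conj a b => PForm.psat I J a ∧ PForm.psat I J b
  | I, J, .disj a b => PForm.psat I J a ∨ PForm.psat I J b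

lemma psat_both {α : Type} (φ : PForm α) :
    ∀ (I J K : Set α), I ⊆ K → K ⊆ J →
      (PForm.psat I J φ → PForm.sat K φ) ∧ (PForm.sat K φ → PForm.psat J I φ) := by
  induction φ with
  | atom p => exact fun I J K hIK hKJ => ⟨fun h => hIK h, fun h => hKJ h⟩
  | neg ψ ih =>
    intro I J K hIK hKJ
    exact ⟨fun h hs => h ((ih I J K hIK hKJ).2 hs),
           fun h hs => h ((ih I J K hIK hKJ).1 hs)⟩
  | conj a b iha ihb =>
    intro I J K hIK hKJ
    exact ⟨fun h => ⟨(iha I J K hIK hKJ).1 h.1, (ihb I J K hIK hKJ).1 h.2⟩,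
           fun h => ⟨(iha I J K hIK hKJ).2 h.1, (ihb I J K hIK hKJ).2 h.2⟩⟩
  | disj a b iha ihb =>
    intro I J K hIK hKJ
    exact ⟨fun h => h.imp (iha I J K hIK hKJ).1 (ihb I J K hIK hKJ).1,
           fun h => h.imp (iha I J K hIK hKJ).2 (ihb I J K hIK hKJ).2⟩

/-- If an approximating pair certainly satisfies φ, every approximated
    interpretation classically satisfies φ. -/
theorem psat_approx_sat {α : Type} [Fintype α]
    (φ : PForm α) (I J K : Set α)
    (hIJ : I ⊆ J) (h : PForm.psat I J φ)
    (hIK : I ⊆ K) (hKJ : K ⊆ J) :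
    PForm.sat K φ := (psat_both φ I J K hIK hKJ).1 h
end

section
/- Let (I,J) be an approximating pair (I ⊆ J). If there exists an interpretation K with I ⊆ K ⊆ J such that K ⊨ φ classically, then (J,I) ⊨ φ under the pair evaluation. -/
lemma psat_aux {α : Type} (φ : PForm α) :
    ∀ I J K : Set α, I ⊆ K → K ⊆ J →
      (PForm.sat K φ → PForm.psat J I φ) ∧ (PForm.psat I J φ → PForm.sat K φ) := by
  induction φ with
  | atom p => intro I J K hIK hKJ; exact ⟨fun h => hKJ h, fun h => hIK h⟩
  | neg ψ ih =>
    intro I J K hIK hKJ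
    constructor
    · intro h hc; exact h ((ih I J K hIK hKJ).2 hc)
    · intro h hc; exact h ((ih I J K hIK hKJ).1 hc)
  | conj a b iha ihb =>
    intro I J K hIK hKJ
    exact ⟨fun h => ⟨(iha I J K hIK hKJ).1 h.1, (ihb I J K hIK hKJ).1 h.2⟩,
           fun h => ⟨(iha I J K hIK hKJ).2 h.1, (ihb I J K hIK hKJ).2 h.2⟩⟩
  | disj a b iha ihb =>
    intro I J K hIK hKJ
    exact ⟨fun h => h.imp (iha I J K hIK hKJ).1 (ihb I J K hIK hKJ).1,
           fun h => h.imp (iha I J K hIK hKJ).2 (ihb I J K hIK hKJ).2⟩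

/-- If some interpretation approximated by (I,J) classically satisfies φ,
    then the reversed pair evaluation (J,I) ⊨ φ holds. -/
theorem sat_approx_psat_rev {α : Type} [Fintype α]
    (φ : PForm α) (I J K : Set α)
    (hIJ : I ⊆ J) (hIK : I ⊆ K) (hKJ : K ⊆ J)
    (h : PForm.sat K φ) :
    PForm.psat J I φ := (psat_aux φ I J K hIK hKJ).1 h
end

section
/- In the paper's Operation 5 (knowledge production): removing from W all pairs (I',J') such that (J',I') ⊭ ψ commutes with refinement, in the following sense: if (I',J') is refined to (I'',J'') (I' ⊆ I'', J'' ⊆ J'), and (J',I') ⊭ ψ, then also (J'',I'') ⊭ ψ. Hence a pair eliminated by a knowledge-producing rule at some stage would also be eliminated at any later, more precise stage. -/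
/-- Elimination by a knowledge-producing rule (Operation 5) commutes with
    refinement: if the possible evaluation of ψ fails at (I',J'), it fails at
    any refinement (I'',J''). -/
theorem op5_elimination_persists {α : Type} [Fintype α]
    (ψ : PForm α) (I' I'' J' J'' : Set α)
    (hI : I' ⊆ I'') (hJ : J'' ⊆ J')
    (h : ¬ PForm.psat J' I' ψ) :
    ¬ PForm.psat J'' I'' ψ := by
  have mono : ∀ (φ : PForm α) (A B C D : Set α), A ⊆ B → D ⊆ C →
      PForm.psat A C φ → PForm.psat B D φ := by
    intro φ
    induction φ with
    | atom p => intro A B C D hAB hDC h; exact hAB h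
    | neg χ ih => intro A B C D hAB hDC h hc; exact h (ih D C B A hDC hAB hc)
    | conj a b iha ihb =>
        intro A B C D hAB hDC h
        exact ⟨iha A B C D hAB hDC h.1, ihb A B C D hAB hDC h.2⟩
    | disj a b iha ihb =>
        intro A B C D hAB hDC h
        exact h.elim (fun x => Or.inl (iha A B C D hAB hDC x))
          (fun x => Or.inr (ihb A B C D hAB hDC x))
  exact fun hc => h (mono ψ J'' J' I'' I' hJ hI hc)
end

section
/- For the knowledge producing definition { Kq ← ¬Kp ; Kp ← ¬Kq } over atoms {p,q}, there exist two complete derivation sequences with different limits: one that first applies the rule Kq ← ¬Kp, ending in a state where q is known and p is not, and one that first applies Kp ← ¬Kq, ending in a state where p is known and q is not. Hence complete derivation sequences that are not sound need not be confluent. -/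
/-- FO(K)-style formulas without nesting of K: propositional formulas extended
    with modal literals `K ψ` where ψ is modal-free. -/
inductive MForm (α : Type) : Type
  | atom : α → MForm α
  | K    : PForm α → MForm α
  | neg  : MForm α → MForm α
  | conj : MForm α → MForm α → MForm α
  | disj : MForm α → MForm α → MForm α

/-- Satisfaction in a knowledge structure (I, W): atoms in I, `K ψ` holds iff
    ψ holds classically in every world of W. -/
def MForm.msat {α : Type} (I : Set α) (W : Set (Set α)) : MForm α → Prop
  | .atom p => p ∈ I
  | .K ψ => ∀ J ∈ W, PForm.sat J ψ
  | .neg φ => ¬ MForm.msat I W φ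
  | .conj a b => MForm.msat I W a ∧ MForm.msat I W b
  | .disj a b => MForm.msat I W a ∨ MForm.msat I W b

/-- Reverse an approximating pair. -/
def prRev {α : Type} (pr : Set α × Set α) : Set α × Set α := (pr.2, pr.1)

/-- Approximate modal evaluation in an approximate knowledge structure
    ((I,J), W): atoms in I; `K ψ` holds iff ψ holds at every pair of W;
    negation swaps the outer pair and reverses every pair of W. -/
def MForm.asat {α : Type} : Set α × Set α → Set (Set α × Set α) → MForm α → Prop
  | pr, _, .atom p => p ∈ pr.1
  | _, W, .K ψ => ∀ pr' ∈ W, PForm.psat pr'.1 pr'.2 ψ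
  | pr, W, .neg φ => ¬ MForm.asat (pr.2, pr.1) (prRev '' W) φ
  | pr, W, .conj a b => MForm.asat pr W a ∧ MForm.asat pr W b
  | pr, W, .disj a b => MForm.asat pr W a ∨ MForm.asat pr W b

/-- Embedding of modal-free formulas into FO(K) formulas. -/
def PForm.toM {α : Type} : PForm α → MForm α
  | .atom p => MForm.atom p
  | .neg φ => MForm.neg (PForm.toM φ)
  | .conj a b => MForm.conj (PForm.toM a) (PForm.toM b)
  | .disj a b => MForm.disj (PForm.toM a) (PForm.toM b)

/-- Atoms for the example { Kq ← ¬Kp ; Kp ← ¬Kq }: p = true, q = false. -/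
def pAtm : PForm Bool := PForm.atom true
def qAtm : PForm Bool := PForm.atom false

/-- The maximally ignorant world set: an approximating pair for each of the
    four possible worlds. -/
def W0 : Set (Set Bool × Set Bool) := {pr | ∃ O : Set Bool, pr = (O, O)}

/-- Applying Operation 5 for the rule Kq ← ¬Kp to W0. -/
def Wq : Set (Set Bool × Set Bool) := {pr ∈ W0 | PForm.psat pr.2 pr.1 qAtm}

/-- Applying Operation 5 for the rule Kp ← ¬Kq to W0. -/
def Wp : Set (Set Bool × Set Bool) := {pr ∈ W0 | PForm.psat pr.2 pr.1 pAtm}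


lemma prRev_W0 : prRev '' W0 = W0 := by
  ext pr
  constructor
  · rintro ⟨x, ⟨O, rfl⟩, rfl⟩
    exact ⟨O, rfl⟩
  · rintro ⟨O, rfl⟩
    exact ⟨(O,O), ⟨O, rfl⟩, rfl⟩

lemma Wq_eq : Wq = {pr | ∃ O : Set Bool, false ∈ O ∧ pr = (O, O)} := by
  ext pr
  constructor
  · rintro ⟨⟨O, rfl⟩, h⟩
    exact ⟨O, h, rfl⟩
  · rintro ⟨O, h, rfl⟩
    exact ⟨⟨O, rfl⟩, h⟩

lemma Wp_eq : Wp = {pr | ∃ O : Set Bool, true ∈ O ∧ pr = (O, O)} := by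
  ext pr
  constructor
  · rintro ⟨⟨O, rfl⟩, h⟩
    exact ⟨O, h, rfl⟩
  · rintro ⟨O, h, rfl⟩
    exact ⟨⟨O, rfl⟩, h⟩

lemma prRev_Wq : prRev '' Wq = Wq := by
  rw [Wq_eq]
  ext pr
  constructor
  · rintro ⟨x, ⟨O, h, rfl⟩, rfl⟩
    exact ⟨O, h, rfl⟩
  · rintro ⟨O, h, rfl⟩
    exact ⟨(O,O), ⟨O, h, rfl⟩, rfl⟩

lemma prRev_Wp : prRev '' Wp = Wp := by
  rw [Wp_eq]
  ext pr
  constructor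
  · rintro ⟨x, ⟨O, h, rfl⟩, rfl⟩
    exact ⟨O, h, rfl⟩
  · rintro ⟨O, h, rfl⟩
    exact ⟨(O,O), ⟨O, h, rfl⟩, rfl⟩

/-- For { Kq ← ¬Kp ; Kp ← ¬Kq } there are two complete derivation sequences
    with different limits: both rule bodies hold at the initial structure; the
    sequence applying the first rule ends (completely: no operation can change
    the structure any further) in a state knowing q but not p, the one applying
    the second rule ends in a state knowing p but not q, and the two limits
    differ.  Hence complete but unsound sequences need not be confluent. -/
theorem two_rules_not_confluent :
    -- both operations are applicable at the initial structure
    (MForm.asat (∅, Set.univ) W0 (MForm.neg (MForm.K pAtm)) ∧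
     MForm.asat (∅, Set.univ) W0 (MForm.neg (MForm.K qAtm))) ∧
    -- first sequence: q is known, p is not, and the sequence is complete
    (MForm.asat (∅, Set.univ) Wq (MForm.K qAtm) ∧
     ¬ MForm.asat (∅, Set.univ) Wq (MForm.K pAtm) ∧
     {pr ∈ Wq | PForm.psat pr.2 pr.1 qAtm} = Wq ∧
     ¬ MForm.asat (∅, Set.univ) Wq (MForm.neg (MForm.K qAtm))) ∧
    -- second sequence: p is known, q is not, and the sequence is complete
    (MForm.asat (∅, Set.univ) Wp (MForm.K pAtm) ∧
     ¬ MForm.asat (∅, Set.univ) Wp (MForm.K qAtm) ∧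
     {pr ∈ Wp | PForm.psat pr.2 pr.1 pAtm} = Wp ∧
     ¬ MForm.asat (∅, Set.univ) Wp (MForm.neg (MForm.K pAtm))) ∧
    -- the two limits differ
    Wq ≠ Wp := by
  refine ⟨⟨?_, ?_⟩, ⟨?_, ?_, ?_, ?_⟩, ⟨?_, ?_, ?_, ?_⟩, ?_⟩
  · simp only [MForm.asat, prRev_W0]
    intro h
    exact (h (∅, ∅) ⟨∅, rfl⟩)
  · simp only [MForm.asat, prRev_W0]
    intro h
    exact (h (∅, ∅) ⟨∅, rfl⟩)
  · rintro ⟨a,b⟩ hpr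
    rw [Wq_eq] at hpr
    obtain ⟨O, h, hO⟩ := hpr
    cases hO; exact h
  · intro h
    have := h ({false}, {false}) (by rw [Wq_eq]; exact ⟨{false}, rfl, rfl⟩)
    simp [PForm.psat, pAtm] at this
  · ext pr
    constructor
    · rintro ⟨h, _⟩; exact h
    · intro h
      refine ⟨h, ?_⟩
      rw [Wq_eq] at h
      obtain ⟨O, hm, rfl⟩ := h
      exact hm
  · simp only [MForm.asat, prRev_Wq]
    intro h
    apply h
    rintro ⟨a,b⟩ hpr
    rw [Wq_eq] at hpr
    obtain ⟨O, hm, hO⟩ := hpr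
    cases hO; exact hm
  · rintro ⟨a,b⟩ hpr
    rw [Wp_eq] at hpr
    obtain ⟨O, h, hO⟩ := hpr
    cases hO; exact h
  · intro h
    have := h ({true}, {true}) (by rw [Wp_eq]; exact ⟨{true}, rfl, rfl⟩)
    simp [PForm.psat, qAtm] at this
  · ext pr
    constructor
    · rintro ⟨h, _⟩; exact h
    · intro h
      refine ⟨h, ?_⟩
      rw [Wp_eq] at h
      obtain ⟨O, hm, rfl⟩ := h
      exact hm
  · simp only [MForm.asat, prRev_Wp]
    intro h
    apply h
    rintro ⟨a,b⟩ hpr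
    rw [Wp_eq] at hpr
    obtain ⟨O, hm, hO⟩ := hpr
    cases hO; exact hm
  · intro h
    have h1 : ({false}, ({false}:Set Bool)) ∈ Wq := by
      rw [Wq_eq]; exact ⟨{false}, rfl, rfl⟩
    rw [h, Wp_eq] at h1
    obtain ⟨O, hm, hO⟩ := h1
    cases hO
    simp at hm
end
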